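/- Let d ≥ 5 and suppose M : ℤ^d × ℤ^d → ℝ satisfies |M(n₁,n₂)| ≤ C/|n₁-n₂|^{3(d-2)}, and let 1/4 < α ≤ 1/3, v_n = κ|n|^{-α}. Define P₄(n₁,n₂) = (v_{n₁}² - v_{n₂}²)² · M(n₁,n₂). Then for all n, n' ∈ ℤ^d, |Σ_{n₁,n₂} G₀(n,n₁) P₄(n₁,n₂) G₀(n₂,n')| ≤ C(d,α)·κ⁴ / (|n-n'|^{d-2} · (min{|n|,|n'|})^{4α}), where |G₀(n,n')| ≤ C_d/|n-n'|^{d-2}. -/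

import Mathlib

/-- For `n ∈ ℤ^d`, `|n| = max(‖n‖_∞, 1)`. -/
noncomputable def znorm {d : ℕ} (n : Fin d → ℤ) : ℝ :=
  max ((Finset.univ.sup fun i => (n i).natAbs : ℕ) : ℝ) 1

namespace ZN

variable {d : ℕ}

lemma one_le (n : Fin d → ℤ) : 1 ≤ znorm n := le_max_right _ _

lemma pos (n : Fin d → ℤ) : 0 < znorm n := zero_lt_one.trans_le (one_le n)

lemma coord_le (n : Fin d → ℤ) (i : Fin d) : (|(n i : ℝ)|) ≤ znorm n := by
  have h1 : ((n i).natAbs : ℕ) ≤ (Finset.univ.sup fun i => (n i).natAbs : ℕ) :=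
    Finset.le_sup (f := fun i => (n i).natAbs) (Finset.mem_univ i)
  have h2 : ((n i).natAbs : ℝ) ≤ ((Finset.univ.sup fun i => (n i).natAbs : ℕ) : ℝ) := by
    exact_mod_cast h1
  calc |(n i : ℝ)| = ((n i).natAbs : ℝ) := by
        rw [Nat.cast_natAbs]; push_cast; ring
    _ ≤ _ := h2.trans (le_max_left _ _)

lemma znorm_neg (n : Fin d → ℤ) : znorm (-n) = znorm n := by
  unfold znorm
  congr 2
  apply Finset.sup_congr rfl
  intro i _
  simp

lemma sub_comm (u v : Fin d → ℤ) : znorm (u - v) = znorm (v - u) := by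
  rw [← znorm_neg (u - v)]; congr 1; abel

lemma add_le (u v : Fin d → ℤ) : znorm (u + v) ≤ znorm u + znorm v := by
  unfold znorm
  apply max_le
  · have h : (Finset.univ.sup fun i => ((u + v) i).natAbs : ℕ) ≤
        (Finset.univ.sup fun i => (u i).natAbs : ℕ) +
        (Finset.univ.sup fun i => (v i).natAbs : ℕ) := by
      apply Finset.sup_le
      intro i _
      have : ((u + v) i).natAbs = (u i + v i).natAbs := by simp
      rw [this]
      exact (Int.natAbs_add_le _ _).trans
        (add_le_add (Finset.le_sup (f := fun i => (u i).natAbs) (Finset.mem_univ i)) (Finset.le_sup (f := fun i => (v i).natAbs) (Finset.mem_univ i)))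
    calc ((Finset.univ.sup fun i => ((u + v) i).natAbs : ℕ) : ℝ) ≤
        ((Finset.univ.sup fun i => (u i).natAbs : ℕ) : ℝ) +
        ((Finset.univ.sup fun i => (v i).natAbs : ℕ) : ℝ) := by exact_mod_cast h
      _ ≤ _ := add_le_add (le_max_left _ _) (le_max_left _ _)
  · calc (1:ℝ) ≤ 1 + 1 := by norm_num
      _ ≤ _ := add_le_add (le_max_right _ _) (le_max_right _ _)

lemma sub_le (u v : Fin d → ℤ) : znorm (u - v) ≤ znorm u + znorm v := by
  rw [sub_eq_add_neg]
  exact (add_le u (-v)).trans (by rw [znorm_neg])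

lemma tri (u v w : Fin d → ℤ) : znorm (u - w) ≤ znorm (u - v) + znorm (v - w) := by
  have : u - w = (u - v) + (v - w) := by abel
  rw [this]; exact add_le _ _

lemma abs_sub (u v : Fin d → ℤ) : |znorm u - znorm v| ≤ znorm (u - v) := by
  rw [abs_sub_le_iff]
  constructor
  · have h : znorm u ≤ znorm (u - v) + znorm v := by
      have : u = (u - v) + v := by abel
      calc znorm u = znorm ((u - v) + v) := by rw [← this]
        _ ≤ _ := add_le _ _
    linarith
  · have h : znorm v ≤ znorm (v - u) + znorm u := by
      have : v = (v - u) + u := by abel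
      calc znorm v = znorm ((v - u) + u) := by rw [← this]
        _ ≤ _ := add_le _ _
    rw [sub_comm]
    linarith

/-- anti-monotonicity of `x ↦ x^(-p)` -/
lemma rpow_neg_anti {A B : ℝ} (hA : 0 < A) (hAB : A ≤ B) {p : ℝ} (hp : 0 ≤ p) :
    B ^ (-p) ≤ A ^ (-p) := by
  rw [Real.rpow_neg (hA.trans_le hAB).le, Real.rpow_neg hA.le]
  exact inv_anti₀ (Real.rpow_pos_of_pos hA p) (Real.rpow_le_rpow hA.le hAB hp)

lemma pow_rpow_comm (j : ℕ) (c : ℝ) : ((2:ℝ)^j)^c = ((2:ℝ)^c)^j := by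
  rw [← Real.rpow_natCast 2 j, ← Real.rpow_mul (by norm_num), mul_comm,
    Real.rpow_mul (by norm_num), Real.rpow_natCast]

lemma floor_logb_le {X : ℝ} (hX : 1 ≤ X) : (2:ℝ)^(⌊Real.logb 2 X⌋₊) ≤ X := by
  have hpos : (0:ℝ) < X := zero_lt_one.trans_le hX
  have h1 : (2:ℝ)^((⌊Real.logb 2 X⌋₊ : ℝ)) ≤ (2:ℝ)^(Real.logb 2 X) :=
    Real.rpow_le_rpow_of_exponent_le one_le_two (Nat.floor_le (Real.logb_nonneg one_lt_two hX))
  rw [Real.rpow_logb two_pos (by norm_num) hpos] at h1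
  rwa [Real.rpow_natCast] at h1

lemma lt_floor_logb {X : ℝ} (hX : 1 ≤ X) : X < (2:ℝ)^(⌊Real.logb 2 X⌋₊ + 1) := by
  have hpos : (0:ℝ) < X := zero_lt_one.trans_le hX
  have h1 : (2:ℝ)^(Real.logb 2 X) < (2:ℝ)^(((⌊Real.logb 2 X⌋₊ + 1 : ℕ) : ℝ)) := by
    apply Real.rpow_lt_rpow_of_exponent_lt one_lt_two
    push_cast
    exact Nat.lt_floor_add_one _
  rw [Real.rpow_logb two_pos (by norm_num) hpos, Real.rpow_natCast] at h1
  exact h1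

noncomputable def idx (m : Fin d → ℤ) : ℕ := ⌊Real.logb 2 (znorm m)⌋₊

lemma idx_le (m : Fin d → ℤ) : (2:ℝ)^(idx m) ≤ znorm m := floor_logb_le (one_le m)
lemma idx_gt (m : Fin d → ℤ) : znorm m < (2:ℝ)^(idx m + 1) := lt_floor_logb (one_le m)

lemma card_fiber (F : Finset (Fin d → ℤ)) (j : ℕ) :
    ((F.filter fun m => idx m = j).card : ℝ) ≤ (8:ℝ)^d * ((2:ℝ)^j)^d := by
  classical
  set N : ℤ := 2^(j+1) with hN
  have hsub : (F.filter fun m => idx m = j) ⊆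
      Fintype.piFinset (fun _ : Fin d => Finset.Icc (-N) N) := by
    intro m hm
    rw [Finset.mem_filter] at hm
    rw [Fintype.mem_piFinset]
    intro i
    have h1 : |(m i : ℝ)| ≤ znorm m := coord_le m i
    have h2 : znorm m < (2:ℝ)^(j+1) := hm.2 ▸ idx_gt m
    have h3 : |(m i : ℝ)| ≤ (N : ℝ) := by
      rw [hN]; push_cast
      exact h1.trans h2.le
    have h4 : |m i| ≤ N := by exact_mod_cast h3
    rw [Finset.mem_Icc]
    exact abs_le.mp h4
  have hcard := Finset.card_le_card hsub
  have hbox : (Fintype.piFinset (fun _ : Fin d => Finset.Icc (-N) N)).card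
      = ((2*N+1).toNat)^d := by
    rw [Fintype.card_piFinset]
    simp only [Int.card_Icc]
    rw [Finset.prod_const, Finset.card_univ, Fintype.card_fin]
    congr 1
    omega
  have hNval : ((2*N+1).toNat : ℝ) ≤ (2:ℝ)^(j+3) := by
    have : ((2*N+1).toNat : ℝ) = 2*(N:ℝ)+1 := by
      have hNpos : (0:ℤ) ≤ 2*N+1 := by positivity
      rw [← Int.cast_natCast, Int.toNat_of_nonneg hNpos]; push_cast; ring
    rw [this, hN]
    push_cast
    have : (2:ℝ)^(j+3) = 4*(2:ℝ)^(j+1) := by ring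
    rw [this]
    have : (1:ℝ) ≤ (2:ℝ)^(j+1) := one_le_pow₀ one_le_two
    nlinarith
  calc ((F.filter fun m => idx m = j).card : ℝ)
      ≤ (((2*N+1).toNat)^d : ℕ) := by exact_mod_cast hcard.trans_eq hbox
    _ = (((2*N+1).toNat : ℝ))^d := by push_cast; ring
    _ ≤ ((2:ℝ)^(j+3))^d := pow_le_pow_left₀ (by positivity) hNval d
    _ = (8:ℝ)^d * ((2:ℝ)^j)^d := by
        rw [← mul_pow]; congr 1; ring

lemma geom_le {r : ℝ} (h0 : 0 ≤ r) (h1 : r < 1) (K j0 : ℕ) :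
    ∑ j ∈ (Finset.range K).filter (fun j => j0 ≤ j), r^j ≤ r^j0 / (1 - r) := by
  have hsub : (Finset.range K).filter (fun j => j0 ≤ j) ⊆ Finset.Ico j0 (j0 + K) := by
    intro j hj
    rw [Finset.mem_filter, Finset.mem_range] at hj
    rw [Finset.mem_Ico]
    exact ⟨hj.2, by omega⟩
  calc ∑ j ∈ (Finset.range K).filter (fun j => j0 ≤ j), r^j
      ≤ ∑ j ∈ Finset.Ico j0 (j0 + K), r^j :=
        Finset.sum_le_sum_of_subset_of_nonneg hsub (fun i _ _ => by positivity)
    _ = ∑ i ∈ Finset.range (j0 + K - j0), r^(j0 + i) := Finset.sum_Ico_eq_sum_range _ _ _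
    _ = r^j0 * ∑ i ∈ Finset.range K, r^i := by
        rw [Nat.add_sub_cancel_left, Finset.mul_sum]
        congr 1; ext i; rw [pow_add]
    _ ≤ r^j0 * (1 / (1-r)) := by
        apply mul_le_mul_of_nonneg_left _ (by positivity)
        rw [geom_sum_eq h1.ne K]
        have e : (r ^ K - 1) / (r - 1) = (1 - r ^ K) / (1 - r) := by
          rw [div_eq_div_iff (by linarith) (by linarith)]; ring
        rw [e, div_le_div_iff₀ (by linarith) (by linarith)]
        have : (0:ℝ) ≤ r^K := by positivity
        nlinarith
    _ = r^j0 / (1-r) := by ring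

lemma geom_le' {ρ : ℝ} (h1 : 1 < ρ) (K j1 : ℕ) :
    ∑ j ∈ (Finset.range K).filter (fun j => j ≤ j1), ρ^j ≤ ρ^(j1+1) / (ρ - 1) := by
  have hsub : (Finset.range K).filter (fun j => j ≤ j1) ⊆ Finset.range (j1+1) := by
    intro j hj
    rw [Finset.mem_filter] at hj
    rw [Finset.mem_range]
    omega
  calc ∑ j ∈ (Finset.range K).filter (fun j => j ≤ j1), ρ^j
      ≤ ∑ j ∈ Finset.range (j1+1), ρ^j :=
        Finset.sum_le_sum_of_subset_of_nonneg hsub (fun i _ _ => by positivity)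
    _ = (ρ^(j1+1) - 1) / (ρ - 1) := geom_sum_eq h1.ne' _
    _ ≤ ρ^(j1+1) / (ρ - 1) := by
        rw [div_le_div_iff₀ (by linarith) (by linarith)]
        nlinarith [pow_pos (by linarith : (0:ℝ) < ρ) (j1+1)]

lemma tail_sum (p : ℝ) (hp : (d:ℝ) < p) :
    ∃ C, 0 < C ∧ ∀ (F : Finset (Fin d → ℤ)) (T : ℝ), 1 ≤ T → (∀ m ∈ F, T ≤ znorm m) →
      ∑ m ∈ F, znorm m ^ (-p) ≤ C * T ^ ((d:ℝ) - p) := by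
  have hp0 : 0 ≤ p := le_trans (Nat.cast_nonneg d) hp.le
  set r : ℝ := (2:ℝ) ^ ((d:ℝ) - p) with hr
  have hr0 : 0 < r := Real.rpow_pos_of_pos two_pos _
  have hr1 : r < 1 := Real.rpow_lt_one_of_one_lt_of_neg one_lt_two (by linarith)
  have hr1' : (0:ℝ) < 1 - r := by linarith
  refine ⟨(8:ℝ)^d * ((2:ℝ)^(p - (d:ℝ))) / (1 - r), div_pos (by positivity) hr1', ?_⟩
  intro F T hT hF
  classical
  set j0 := ⌊Real.logb 2 T⌋₊ with hj0
  set K := F.sup idx + 1 with hK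
  have hmaps : ∀ m ∈ F, idx m ∈ Finset.range K := by
    intro m hm; rw [Finset.mem_range, hK]; exact Nat.lt_succ_of_le (Finset.le_sup hm)
  rw [← Finset.sum_fiberwise_of_maps_to hmaps (fun m => znorm m ^ (-p))]
  have key : r^j0 ≤ (2:ℝ)^(p-(d:ℝ)) * T^((d:ℝ)-p) := by
    have h1 : T/2 < (2:ℝ)^j0 := by
      have h0 := lt_floor_logb hT
      rw [pow_succ] at h0
      linarith
    have h2 : r^j0 = ((2:ℝ)^j0)^((d:ℝ)-p) := (pow_rpow_comm j0 _).symm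
    have h3 : ((2:ℝ)^j0)^((d:ℝ)-p) ≤ (T/2)^((d:ℝ)-p) := by
      have h4 := rpow_neg_anti (A := T/2) (B := (2:ℝ)^j0) (by linarith) h1.le
        (p := p - (d:ℝ)) (by linarith)
      rw [neg_sub] at h4
      exact h4
    have h5 : (T/2)^((d:ℝ)-p) = (2:ℝ)^(p-(d:ℝ)) * T^((d:ℝ)-p) := by
      rw [Real.div_rpow (by linarith) (by norm_num),
        div_eq_mul_inv, ← Real.rpow_neg (by norm_num : (0:ℝ) ≤ 2), neg_sub]
      ring
    rw [h2, ← h5]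
    exact h3
  have hfib : ∀ j ∈ Finset.range K,
      (∑ m ∈ F.filter (fun m => idx m = j), znorm m ^ (-p)) ≤
      (if j0 ≤ j then (8:ℝ)^d * r^j else 0) := by
    intro j _
    by_cases hj : j0 ≤ j
    · rw [if_pos hj]
      have hstep : ∀ m ∈ F.filter (fun m => idx m = j), znorm m ^ (-p) ≤ ((2:ℝ)^j)^(-p) := by
        intro m hm
        rw [Finset.mem_filter] at hm
        exact rpow_neg_anti (by positivity) (hm.2 ▸ idx_le m) hp0
      calc (∑ m ∈ F.filter (fun m => idx m = j), znorm m ^ (-p))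
          ≤ (F.filter (fun m => idx m = j)).card • (((2:ℝ)^j)^(-p)) :=
            Finset.sum_le_card_nsmul _ _ _ hstep
        _ = ((F.filter (fun m => idx m = j)).card : ℝ) * (((2:ℝ)^j)^(-p)) := by
            rw [nsmul_eq_mul]
        _ ≤ (8:ℝ)^d * ((2:ℝ)^j)^d * (((2:ℝ)^j)^(-p)) :=
            mul_le_mul_of_nonneg_right (card_fiber F j) (by positivity)
        _ = (8:ℝ)^d * r^j := by
            rw [mul_assoc]
            congr 1
            rw [← Real.rpow_natCast ((2:ℝ)^j) d, ← Real.rpow_add (by positivity),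
              ← sub_eq_add_neg, pow_rpow_comm j ((d:ℝ) - p), hr]
    · rw [if_neg hj]
      have hempty : F.filter (fun m => idx m = j) = ∅ := by
        apply Finset.eq_empty_of_forall_notMem
        intro m hm
        rw [Finset.mem_filter] at hm
        apply hj
        have h1 : (2:ℝ)^j0 ≤ T := floor_logb_le hT
        have h2 : znorm m < (2:ℝ)^(j+1) := hm.2 ▸ idx_gt m
        have h3 : (2:ℝ)^j0 < (2:ℝ)^(j+1) := lt_of_le_of_lt (h1.trans (hF m hm.1)) h2
        have h4 := (pow_lt_pow_iff_right₀ one_lt_two).mp h3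
        omega
      rw [hempty, Finset.sum_empty]
  calc (∑ j ∈ Finset.range K, ∑ m ∈ F.filter (fun m => idx m = j), znorm m ^ (-p))
      ≤ ∑ j ∈ Finset.range K, (if j0 ≤ j then (8:ℝ)^d * r^j else 0) :=
        Finset.sum_le_sum hfib
    _ = ∑ j ∈ (Finset.range K).filter (fun j => j0 ≤ j), (8:ℝ)^d * r^j := by
        rw [Finset.sum_filter]
    _ = (8:ℝ)^d * ∑ j ∈ (Finset.range K).filter (fun j => j0 ≤ j), r^j := by
        rw [Finset.mul_sum]
    _ ≤ (8:ℝ)^d * (r^j0/(1-r)) :=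
        mul_le_mul_of_nonneg_left (geom_le hr0.le hr1 K j0) (by positivity)
    _ ≤ (8:ℝ)^d * ((2:ℝ)^(p-(d:ℝ)) * T^((d:ℝ)-p)/(1-r)) := by
        have h5 : r^j0/(1-r) ≤ (2:ℝ)^(p-(d:ℝ)) * T^((d:ℝ)-p)/(1-r) := by
          apply div_le_div_of_nonneg_right ?h ?hh
          case h => exact key
          case hh => linarith
        exact mul_le_mul_of_nonneg_left h5 (by positivity)
    _ = (8:ℝ)^d * ((2:ℝ)^(p - (d:ℝ))) / (1 - r) * T ^ ((d:ℝ) - p) := by ring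

lemma ball_sum (σ : ℝ) (hσ0 : 0 ≤ σ) (hσ : σ < (d:ℝ)) :
    ∃ C, 0 < C ∧ ∀ (F : Finset (Fin d → ℤ)) (B : ℝ), 1 ≤ B → (∀ m ∈ F, znorm m ≤ B) →
      ∑ m ∈ F, znorm m ^ (-σ) ≤ C * B ^ ((d:ℝ) - σ) := by
  set ρ : ℝ := (2:ℝ) ^ ((d:ℝ) - σ) with hρ
  have hρ1 : 1 < ρ := by
    rw [hρ]
    rw [show (1:ℝ) = (2:ℝ)^(0:ℝ) by simp]
    exact Real.rpow_lt_rpow_of_exponent_lt one_lt_two (by linarith)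
  have hρ0 : 0 < ρ := lt_trans one_pos hρ1
  have hρ1' : (0:ℝ) < ρ - 1 := by linarith
  refine ⟨(8:ℝ)^d * (ρ*ρ) / (ρ - 1), div_pos (by positivity) hρ1', ?_⟩
  intro F B hB hF
  classical
  set j1 := ⌊Real.logb 2 B⌋₊ with hj1
  set K := F.sup idx + 1 with hK
  have hmaps : ∀ m ∈ F, idx m ∈ Finset.range K := by
    intro m hm; rw [Finset.mem_range, hK]; exact Nat.lt_succ_of_le (Finset.le_sup hm)
  rw [← Finset.sum_fiberwise_of_maps_to hmaps (fun m => znorm m ^ (-σ))]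
  have hfib : ∀ j ∈ Finset.range K,
      (∑ m ∈ F.filter (fun m => idx m = j), znorm m ^ (-σ)) ≤
      (if j ≤ j1 then (8:ℝ)^d * ρ^j else 0) := by
    intro j _
    by_cases hj : j ≤ j1
    · rw [if_pos hj]
      have hstep : ∀ m ∈ F.filter (fun m => idx m = j), znorm m ^ (-σ) ≤ ((2:ℝ)^j)^(-σ) := by
        intro m hm
        rw [Finset.mem_filter] at hm
        exact rpow_neg_anti (by positivity) (hm.2 ▸ idx_le m) hσ0
      calc (∑ m ∈ F.filter (fun m => idx m = j), znorm m ^ (-σ))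
          ≤ (F.filter (fun m => idx m = j)).card • (((2:ℝ)^j)^(-σ)) :=
            Finset.sum_le_card_nsmul _ _ _ hstep
        _ = ((F.filter (fun m => idx m = j)).card : ℝ) * (((2:ℝ)^j)^(-σ)) := by
            rw [nsmul_eq_mul]
        _ ≤ (8:ℝ)^d * ((2:ℝ)^j)^d * (((2:ℝ)^j)^(-σ)) :=
            mul_le_mul_of_nonneg_right (card_fiber F j) (by positivity)
        _ = (8:ℝ)^d * ρ^j := by
            rw [mul_assoc]
            congr 1
            rw [← Real.rpow_natCast ((2:ℝ)^j) d, ← Real.rpow_add (by positivity),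
              ← sub_eq_add_neg, pow_rpow_comm j ((d:ℝ) - σ), hρ]
    · rw [if_neg hj]
      have hempty : F.filter (fun m => idx m = j) = ∅ := by
        apply Finset.eq_empty_of_forall_notMem
        intro m hm
        rw [Finset.mem_filter] at hm
        apply hj
        have h1 : (2:ℝ)^j ≤ znorm m := hm.2 ▸ idx_le m
        have h2 : B < (2:ℝ)^(j1+1) := lt_floor_logb hB
        have h3 : (2:ℝ)^j < (2:ℝ)^(j1+1) := lt_of_le_of_lt (h1.trans (hF m hm.1)) h2
        have h4 := (pow_lt_pow_iff_right₀ one_lt_two).mp h3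
        omega
      rw [hempty, Finset.sum_empty]
  have key : ρ^j1 ≤ B^((d:ℝ)-σ) := by
    have h1 : (2:ℝ)^j1 ≤ B := floor_logb_le hB
    have h2 : ρ^j1 = ((2:ℝ)^j1)^((d:ℝ)-σ) := (pow_rpow_comm j1 _).symm
    rw [h2]
    exact Real.rpow_le_rpow (by positivity) h1 (by linarith)
  calc (∑ j ∈ Finset.range K, ∑ m ∈ F.filter (fun m => idx m = j), znorm m ^ (-σ))
      ≤ ∑ j ∈ Finset.range K, (if j ≤ j1 then (8:ℝ)^d * ρ^j else 0) :=
        Finset.sum_le_sum hfib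
    _ = ∑ j ∈ (Finset.range K).filter (fun j => j ≤ j1), (8:ℝ)^d * ρ^j := by
        rw [Finset.sum_filter]
    _ = (8:ℝ)^d * ∑ j ∈ (Finset.range K).filter (fun j => j ≤ j1), ρ^j := by
        rw [Finset.mul_sum]
    _ ≤ (8:ℝ)^d * (ρ^(j1+1)/(ρ-1)) :=
        mul_le_mul_of_nonneg_left (geom_le' hρ1 K j1) (by positivity)
    _ ≤ (8:ℝ)^d * (ρ*ρ) / (ρ - 1) * B ^ ((d:ℝ) - σ) := by
        rw [pow_succ]
        have h6 : ρ ^ j1 * ρ ≤ B^((d:ℝ)-σ) * ρ :=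
          mul_le_mul_of_nonneg_right key hρ0.le
        have h7 : ρ ^ j1 * ρ / (ρ - 1) ≤ B^((d:ℝ)-σ) * ρ / (ρ-1) :=
          div_le_div_of_nonneg_right h6 (by linarith)
        calc (8:ℝ)^d * (ρ ^ j1 * ρ / (ρ - 1)) ≤ (8:ℝ)^d * (B^((d:ℝ)-σ) * ρ / (ρ-1)) :=
              mul_le_mul_of_nonneg_left h7 (by positivity)
          _ = (8:ℝ)^d * ρ / (ρ-1) * B^((d:ℝ)-σ) := by ring
          _ ≤ (8:ℝ)^d * (ρ*ρ) / (ρ - 1) * B ^ ((d:ℝ) - σ) := by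
              have h8 : (8:ℝ)^d * ρ / (ρ-1) ≤ (8:ℝ)^d * (ρ*ρ)/(ρ-1) := by
                apply div_le_div_of_nonneg_right ?_ (by linarith)
                have h9 := mul_pos (pow_pos (show (0:ℝ)<8 by norm_num) d) (mul_pos hρ0 hρ1')
                nlinarith [h9]
              exact mul_le_mul_of_nonneg_right h8 (by positivity)
lemma sum_center (F : Finset (Fin d → ℤ)) (c : Fin d → ℤ) (g : (Fin d → ℤ) → ℝ) :
    ∑ m ∈ F, g (c - m) = ∑ m' ∈ F.image (fun m => c - m), g m' :=
  (Finset.sum_image fun x _ y _ h => by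
    have : c - (c - x) = c - (c - y) := by rw [h]
    simpa using this).symm

lemma global_sum (p : ℝ) (hp : (d:ℝ) < p) :
    ∃ C, 0 < C ∧ ∀ (F : Finset (Fin d → ℤ)) (c : Fin d → ℤ),
      ∑ m ∈ F, znorm (c - m) ^ (-p) ≤ C := by
  obtain ⟨C, hC0, hC⟩ := tail_sum (d := d) p hp
  refine ⟨C, hC0, ?_⟩
  intro F c
  rw [sum_center F c (fun m' => znorm m' ^ (-p))]
  calc ∑ m' ∈ F.image (fun m => c - m), znorm m' ^ (-p)
      ≤ C * (1:ℝ) ^ ((d:ℝ) - p) :=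
        hC _ 1 le_rfl (fun m' _ => one_le m')
    _ = C := by rw [Real.one_rpow, mul_one]

lemma ball_sum_c (σ : ℝ) (hσ0 : 0 ≤ σ) (hσ : σ < (d:ℝ)) :
    ∃ C, 0 < C ∧ ∀ (F : Finset (Fin d → ℤ)) (c : Fin d → ℤ) (B : ℝ), 1 ≤ B →
      (∀ m ∈ F, znorm (c - m) ≤ B) →
      ∑ m ∈ F, znorm (c - m) ^ (-σ) ≤ C * B ^ ((d:ℝ) - σ) := by
  obtain ⟨C, hC0, hC⟩ := ball_sum (d := d) σ hσ0 hσ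
  refine ⟨C, hC0, ?_⟩
  intro F c B hB hF
  rw [sum_center F c (fun m' => znorm m' ^ (-σ))]
  apply hC _ B hB
  intro m' hm'
  rw [Finset.mem_image] at hm'
  obtain ⟨m, hm, rfl⟩ := hm'
  exact hF m hm

lemma pair_bound {p q r : ℝ} (hr0 : 0 ≤ r) (hrp : r ≤ p) (hrq : r ≤ q)
    {P R t : ℝ} (hP : 1 ≤ P) (hR : 1 ≤ R) (ht : 0 < t) (htP : t/2 ≤ P) :
    P^(-p) * R^(-q) ≤ (2:ℝ)^r * t^(-r) * (P^(-(p+q-r)) + R^(-(p+q-r))) := by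
  have hP0 : (0:ℝ) < P := lt_of_lt_of_le one_pos hP
  have hR0 : (0:ℝ) < R := lt_of_lt_of_le one_pos hR
  have hq0 : 0 ≤ q := hr0.trans hrq
  have hp0 : 0 ≤ p := hr0.trans hrp
  have e1 : P^(-p) = P^(-r) * P^(-(p-r)) := by
    rw [← Real.rpow_add hP0]; congr 1; ring
  have e2 : P^(-r) ≤ (2:ℝ)^r * t^(-r) := by
    have h1 : P^(-r) ≤ (t/2)^(-r) := rpow_neg_anti (by linarith) htP hr0
    have h2 : (t/2)^(-r) = (2:ℝ)^r * t^(-r) := by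
      rw [Real.div_rpow ht.le (by norm_num), Real.rpow_neg (by norm_num : (0:ℝ) ≤ 2),
        div_eq_mul_inv, inv_inv]
      ring
    rw [← h2]; exact h1
  have e3 : P^(-(p-r)) * R^(-q) ≤ P^(-(p+q-r)) + R^(-(p+q-r)) := by
    rcases le_total P R with h | h
    · have h4 : R^(-q) ≤ P^(-q) := rpow_neg_anti hP0 h hq0
      calc P^(-(p-r)) * R^(-q) ≤ P^(-(p-r)) * P^(-q) :=
            mul_le_mul_of_nonneg_left h4 (by positivity)
        _ = P^(-(p+q-r)) := by rw [← Real.rpow_add hP0]; congr 1; ring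
        _ ≤ _ := le_add_of_nonneg_right (by positivity)
    · have h4 : P^(-(p-r)) ≤ R^(-(p-r)) := rpow_neg_anti hR0 h (by linarith)
      calc P^(-(p-r)) * R^(-q) ≤ R^(-(p-r)) * R^(-q) :=
            mul_le_mul_of_nonneg_right h4 (by positivity)
        _ = R^(-(p+q-r)) := by rw [← Real.rpow_add hR0]; congr 1; ring
        _ ≤ _ := le_add_of_nonneg_left (by positivity)
  calc P^(-p) * R^(-q) = P^(-r) * (P^(-(p-r)) * R^(-q)) := by rw [e1]; ring
    _ ≤ ((2:ℝ)^r * t^(-r)) * (P^(-(p+q-r)) + R^(-(p+q-r))) := by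
        apply mul_le_mul e2 e3 (by positivity) (by positivity)

lemma conv2 (p q r : ℝ) (hr0 : 0 ≤ r) (hrp : r ≤ p) (hrq : r ≤ q)
    (hd : (d:ℝ) < p + q - r) :
    ∃ C, 0 < C ∧ ∀ (F : Finset (Fin d → ℤ)) (u v : Fin d → ℤ),
      ∑ m ∈ F, znorm (u - m) ^ (-p) * znorm (v - m) ^ (-q)
        ≤ C * znorm (u - v) ^ (-r) := by
  obtain ⟨S, hS0, hS⟩ := global_sum (d := d) (p + q - r) hd
  refine ⟨(2:ℝ)^r * (2*S), by positivity, ?_⟩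
  intro F u v
  set t := znorm (u - v) with htdef
  have ht : 0 < t := pos _
  have key : ∀ m ∈ F, znorm (u - m) ^ (-p) * znorm (v - m) ^ (-q) ≤
      (2:ℝ)^r * t^(-r) *
        (znorm (u - m) ^ (-(p+q-r)) + znorm (v - m) ^ (-(p+q-r))) := by
    intro m _
    have htri : t ≤ znorm (u - m) + znorm (v - m) := by
      calc t ≤ znorm (u - m) + znorm (m - v) := tri u m v
        _ = znorm (u - m) + znorm (v - m) := by rw [sub_comm m v]
    by_cases hc : t/2 ≤ znorm (u - m)
    · exact pair_bound hr0 hrp hrq (one_le _) (one_le _) ht hc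
    · have hc2 : t/2 ≤ znorm (v - m) := by push_neg at hc; linarith
      have h5 := pair_bound (p := q) (q := p) hr0 hrq hrp
        (one_le (v - m)) (one_le (u - m)) ht hc2
      calc znorm (u - m) ^ (-p) * znorm (v - m) ^ (-q)
          = znorm (v - m) ^ (-q) * znorm (u - m) ^ (-p) := by ring
        _ ≤ (2:ℝ)^r * t^(-r) *
            (znorm (v - m) ^ (-(q+p-r)) + znorm (u - m) ^ (-(q+p-r))) := h5
        _ = (2:ℝ)^r * t^(-r) *
            (znorm (u - m) ^ (-(p+q-r)) + znorm (v - m) ^ (-(p+q-r))) := by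
            rw [show q+p-r = p+q-r by ring]; ring
  calc ∑ m ∈ F, znorm (u - m) ^ (-p) * znorm (v - m) ^ (-q)
      ≤ ∑ m ∈ F, (2:ℝ)^r * t^(-r) *
          (znorm (u - m) ^ (-(p+q-r)) + znorm (v - m) ^ (-(p+q-r))) :=
        Finset.sum_le_sum key
    _ = (2:ℝ)^r * t^(-r) *
        ((∑ m ∈ F, znorm (u - m) ^ (-(p+q-r))) + ∑ m ∈ F, znorm (v - m) ^ (-(p+q-r))) := by
        rw [← Finset.mul_sum, ← Finset.sum_add_distrib]
    _ ≤ (2:ℝ)^r * t^(-r) * (S + S) := by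
        apply mul_le_mul_of_nonneg_left (add_le_add (hS F u) (hS F v)) (by positivity)
    _ = (2:ℝ)^r * (2*S) * t^(-r) := by ring

lemma tailconv (β γ : ℝ) (hβ : 0 ≤ β) (hγ0 : 0 ≤ γ) (hγd : γ < (d:ℝ))
    (hsum : (d:ℝ) < β + γ) :
    ∃ C, 0 < C ∧ ∀ (F : Finset (Fin d → ℤ)) (c : Fin d → ℤ) (T : ℝ), 1 ≤ T →
      (∀ m ∈ F, T ≤ znorm m) →
      ∑ m ∈ F, znorm m ^ (-β) * znorm (c - m) ^ (-γ) ≤ C * T ^ ((d:ℝ) - β - γ) := by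
  classical
  obtain ⟨C6, hC60, hC6⟩ := ball_sum_c (d := d) γ hγ0 hγd
  set r : ℝ := (2:ℝ) ^ ((d:ℝ) - β - γ) with hr
  have hr0 : 0 < r := Real.rpow_pos_of_pos two_pos _
  have hr1 : r < 1 := Real.rpow_lt_one_of_one_lt_of_neg one_lt_two (by linarith)
  have hr1' : (0:ℝ) < 1 - r := by linarith
  set Cf : ℝ := (8:ℝ)^d + C6 * (2:ℝ)^((d:ℝ)-γ) with hCf
  have hCf0 : 0 < Cf := by positivity
  refine ⟨Cf * (2:ℝ)^(β + γ - (d:ℝ)) / (1 - r), div_pos (by positivity) hr1', ?_⟩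
  intro F c T hT hF
  set j0 := ⌊Real.logb 2 T⌋₊ with hj0
  set K := F.sup idx + 1 with hK
  have hmaps : ∀ m ∈ F, idx m ∈ Finset.range K := by
    intro m hm; rw [Finset.mem_range, hK]; exact Nat.lt_succ_of_le (Finset.le_sup hm)
  rw [← Finset.sum_fiberwise_of_maps_to hmaps
    (fun m => znorm m ^ (-β) * znorm (c - m) ^ (-γ))]
  have collapse : ∀ j : ℕ, ((2:ℝ)^j)^((d:ℝ)-β-γ) = r^j := by
    intro j
    rw [pow_rpow_comm j ((d:ℝ)-β-γ), hr]
  have hfib : ∀ j ∈ Finset.range K,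
      (∑ m ∈ F.filter (fun m => idx m = j), znorm m ^ (-β) * znorm (c - m) ^ (-γ)) ≤
      (if j0 ≤ j then Cf * r^j else 0) := by
    intro j _
    by_cases hj : j0 ≤ j
    · rw [if_pos hj]
      set G := F.filter (fun m => idx m = j) with hG
      have hGX : ∀ m ∈ G, (2:ℝ)^j ≤ znorm m ∧ znorm m < (2:ℝ)^(j+1) := by
        intro m hm
        rw [hG, Finset.mem_filter] at hm
        exact ⟨hm.2 ▸ idx_le m, hm.2 ▸ idx_gt m⟩
      rw [← Finset.sum_filter_add_sum_filter_not G
        (fun m => znorm m ≤ znorm (c - m))]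
      have hS1 : (∑ m ∈ G.filter (fun m => znorm m ≤ znorm (c - m)),
          znorm m ^ (-β) * znorm (c - m) ^ (-γ)) ≤ (8:ℝ)^d * r^j := by
        have hterm : ∀ m ∈ G.filter (fun m => znorm m ≤ znorm (c - m)),
            znorm m ^ (-β) * znorm (c - m) ^ (-γ) ≤ ((2:ℝ)^j)^(-(β+γ)) := by
          intro m hm
          rw [Finset.mem_filter] at hm
          have h1 := (hGX m hm.1).1
          have h2 : znorm (c - m) ^ (-γ) ≤ znorm m ^ (-γ) :=
            rpow_neg_anti (pos m) hm.2 hγ0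
          calc znorm m ^ (-β) * znorm (c - m) ^ (-γ)
              ≤ znorm m ^ (-β) * znorm m ^ (-γ) :=
                mul_le_mul_of_nonneg_left h2 (Real.rpow_nonneg (pos m).le _)
            _ = znorm m ^ (-(β+γ)) := by rw [← Real.rpow_add (pos m)]; congr 1; ring
            _ ≤ ((2:ℝ)^j)^(-(β+γ)) := rpow_neg_anti (by positivity) h1 (by linarith)
        calc (∑ m ∈ G.filter (fun m => znorm m ≤ znorm (c - m)),
            znorm m ^ (-β) * znorm (c - m) ^ (-γ))
            ≤ (G.filter (fun m => znorm m ≤ znorm (c - m))).card • (((2:ℝ)^j)^(-(β+γ))) :=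
              Finset.sum_le_card_nsmul _ _ _ hterm
          _ = ((G.filter (fun m => znorm m ≤ znorm (c - m))).card : ℝ) * ((2:ℝ)^j)^(-(β+γ)) := by
              rw [nsmul_eq_mul]
          _ ≤ ((8:ℝ)^d * ((2:ℝ)^j)^d) * ((2:ℝ)^j)^(-(β+γ)) := by
              have hcard : ((G.filter (fun m => znorm m ≤ znorm (c - m))).card : ℝ)
                  ≤ (8:ℝ)^d * ((2:ℝ)^j)^d := by
                calc ((G.filter (fun m => znorm m ≤ znorm (c - m))).card : ℝ)
                    ≤ (G.card : ℝ) := by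
                      exact_mod_cast Finset.card_le_card (Finset.filter_subset _ _)
                  _ ≤ (8:ℝ)^d * ((2:ℝ)^j)^d := hG ▸ card_fiber F j
              exact mul_le_mul_of_nonneg_right hcard (by positivity)
          _ = (8:ℝ)^d * r^j := by
              rw [mul_assoc]
              congr 1
              rw [← Real.rpow_natCast ((2:ℝ)^j) d, ← Real.rpow_add (by positivity),
                ← collapse j]
              congr 1
              ring
      have hS2 : (∑ m ∈ G.filter (fun m => ¬ znorm m ≤ znorm (c - m)),
          znorm m ^ (-β) * znorm (c - m) ^ (-γ)) ≤ C6 * (2:ℝ)^((d:ℝ)-γ) * r^j := by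
        have hterm : ∀ m ∈ G.filter (fun m => ¬ znorm m ≤ znorm (c - m)),
            znorm m ^ (-β) * znorm (c - m) ^ (-γ) ≤
            ((2:ℝ)^j)^(-β) * znorm (c - m) ^ (-γ) := by
          intro m hm
          rw [Finset.mem_filter] at hm
          apply mul_le_mul_of_nonneg_right _ (Real.rpow_nonneg (pos _).le _)
          exact rpow_neg_anti (by positivity) (hGX m hm.1).1 hβ
        calc (∑ m ∈ G.filter (fun m => ¬ znorm m ≤ znorm (c - m)),
            znorm m ^ (-β) * znorm (c - m) ^ (-γ))
            ≤ ∑ m ∈ G.filter (fun m => ¬ znorm m ≤ znorm (c - m)),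
              ((2:ℝ)^j)^(-β) * znorm (c - m) ^ (-γ) := Finset.sum_le_sum hterm
          _ = ((2:ℝ)^j)^(-β) * ∑ m ∈ G.filter (fun m => ¬ znorm m ≤ znorm (c - m)),
              znorm (c - m) ^ (-γ) := by rw [Finset.mul_sum]
          _ ≤ ((2:ℝ)^j)^(-β) * (C6 * ((2:ℝ)^(j+1)) ^ ((d:ℝ) - γ)) := by
              have hball : (∑ m ∈ G.filter (fun m => ¬ znorm m ≤ znorm (c - m)),
                  znorm (c - m) ^ (-γ)) ≤ C6 * ((2:ℝ)^(j+1)) ^ ((d:ℝ) - γ) := by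
                apply hC6 _ c ((2:ℝ)^(j+1)) (one_le_pow₀ one_le_two)
                intro m hm
                rw [Finset.mem_filter] at hm
                push_neg at hm
                exact (hm.2.le.trans (hGX m hm.1).2.le)
              exact mul_le_mul_of_nonneg_left hball (by positivity)
          _ = C6 * (2:ℝ)^((d:ℝ)-γ) * r^j := by
              have hcomb : ((2:ℝ)^j)^(-β) * ((2:ℝ)^j)^((d:ℝ)-γ) = r^j := by
                rw [← Real.rpow_add (by positivity), ← collapse j]
                congr 1; ring
              rw [pow_succ, Real.mul_rpow (by positivity) (by norm_num)]
              calc ((2:ℝ)^j)^(-β) * (C6 * (((2:ℝ)^j)^((d:ℝ)-γ) * (2:ℝ)^((d:ℝ)-γ)))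
                  = C6 * (2:ℝ)^((d:ℝ)-γ) * (((2:ℝ)^j)^(-β) * ((2:ℝ)^j)^((d:ℝ)-γ)) := by
                    ring
                _ = _ := by rw [hcomb]
      calc _ ≤ (8:ℝ)^d * r^j + C6 * (2:ℝ)^((d:ℝ)-γ) * r^j := add_le_add hS1 hS2
        _ = Cf * r^j := by rw [hCf]; ring
    · rw [if_neg hj]
      have hempty : F.filter (fun m => idx m = j) = ∅ := by
        apply Finset.eq_empty_of_forall_notMem
        intro m hm
        rw [Finset.mem_filter] at hm
        apply hj
        have h1 : (2:ℝ)^j0 ≤ T := floor_logb_le hT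
        have h2 : znorm m < (2:ℝ)^(j+1) := hm.2 ▸ idx_gt m
        have h3 : (2:ℝ)^j0 < (2:ℝ)^(j+1) := lt_of_le_of_lt (h1.trans (hF m hm.1)) h2
        have h4 := (pow_lt_pow_iff_right₀ one_lt_two).mp h3
        omega
      rw [hempty, Finset.sum_empty]
  have key : r^j0 ≤ (2:ℝ)^(β+γ-(d:ℝ)) * T^((d:ℝ)-β-γ) := by
    have h1 : T/2 < (2:ℝ)^j0 := by
      have h0 := lt_floor_logb hT
      rw [pow_succ] at h0
      linarith
    have h2 : r^j0 = ((2:ℝ)^j0)^((d:ℝ)-β-γ) := (collapse j0).symm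
    have h3 : ((2:ℝ)^j0)^((d:ℝ)-β-γ) ≤ (T/2)^((d:ℝ)-β-γ) := by
      have h4 := rpow_neg_anti (A := T/2) (B := (2:ℝ)^j0) (by linarith) h1.le
        (p := β + γ - (d:ℝ)) (by linarith)
      rw [show -(β + γ - (d:ℝ)) = (d:ℝ)-β-γ by ring] at h4
      exact h4
    have h5 : (T/2)^((d:ℝ)-β-γ) = (2:ℝ)^(β+γ-(d:ℝ)) * T^((d:ℝ)-β-γ) := by
      rw [Real.div_rpow (by linarith) (by norm_num),
        div_eq_mul_inv, ← Real.rpow_neg (by norm_num : (0:ℝ) ≤ 2),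
        show -((d:ℝ)-β-γ) = β+γ-(d:ℝ) by ring]
      ring
    rw [h2, ← h5]
    exact h3
  calc (∑ j ∈ Finset.range K, ∑ m ∈ F.filter (fun m => idx m = j),
        znorm m ^ (-β) * znorm (c - m) ^ (-γ))
      ≤ ∑ j ∈ Finset.range K, (if j0 ≤ j then Cf * r^j else 0) :=
        Finset.sum_le_sum hfib
    _ = ∑ j ∈ (Finset.range K).filter (fun j => j0 ≤ j), Cf * r^j := by
        rw [Finset.sum_filter]
    _ = Cf * ∑ j ∈ (Finset.range K).filter (fun j => j0 ≤ j), r^j := by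
        rw [Finset.mul_sum]
    _ ≤ Cf * (r^j0/(1-r)) :=
        mul_le_mul_of_nonneg_left (geom_le hr0.le hr1 K j0) hCf0.le
    _ ≤ Cf * ((2:ℝ)^(β+γ-(d:ℝ)) * T^((d:ℝ)-β-γ)/(1-r)) := by
        apply mul_le_mul_of_nonneg_left _ hCf0.le
        exact div_le_div_of_nonneg_right key (by linarith)
    _ = Cf * (2:ℝ)^(β + γ - (d:ℝ)) / (1 - r) * T ^ ((d:ℝ) - β - γ) := by ring

lemma znorm_le_add' (u m : Fin d → ℤ) : znorm u ≤ znorm (u - m) + znorm m := by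
  have h : u = (u - m) + m := by abel
  calc znorm u = znorm ((u - m) + m) := by rw [← h]
    _ ≤ _ := add_le _ _

lemma half_collect {t x : ℝ} (ht : 0 < t) (hx : 0 < x) {e : ℝ} (he : 0 ≤ e)
    (h : t/2 ≤ x) : x ^ (-e) ≤ (2:ℝ)^e * t^(-e) := by
  have h1 : x^(-e) ≤ (t/2)^(-e) := rpow_neg_anti (by linarith) h he
  have h2 : (t/2)^(-e) = (2:ℝ)^e * t^(-e) := by
    rw [Real.div_rpow ht.le (by norm_num), Real.rpow_neg (by norm_num : (0:ℝ) ≤ 2),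
      div_eq_mul_inv, inv_inv]
    ring
  rw [← h2]; exact h1

lemma outer (hd5 : 5 ≤ d) (s : ℝ) (hs0 : 0 < s) (hsd : 2 + s < (d:ℝ)) :
    ∃ C, 0 < C ∧ ∀ (F : Finset (Fin d → ℤ)) (u v : Fin d → ℤ),
      ∑ m ∈ F, znorm (u - m) ^ (-((d:ℝ)-2)) * znorm m ^ (-(2+s)) *
        znorm (v - m) ^ (-((d:ℝ)-2))
      ≤ C * znorm (u - v) ^ (-((d:ℝ)-2)) * (min (znorm u) (znorm v)) ^ (-s) := by
  classical
  have hd : (5:ℝ) ≤ (d:ℝ) := by exact_mod_cast hd5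
  set a : ℝ := (d:ℝ) - 2 with ha
  have ha0 : 0 < a := by rw [ha]; linarith
  have hsa : s < a := by rw [ha]; linarith
  obtain ⟨C6, hC60, hC6⟩ := ball_sum (d := d) (2+s) (by linarith) (by linarith)
  obtain ⟨Ct, hCt0, hCt⟩ := tailconv (d := d) (2+s) a (by linarith) ha0.le
    (by rw [ha]; linarith) (by rw [ha]; linarith)
  refine ⟨(8:ℝ)^a * C6 + 2 * ((2:ℝ)^a * Ct * (2:ℝ)^s), by positivity, ?_⟩
  intro F u v
  set T : ℝ := min (znorm u) (znorm v) with hTdef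
  have hT1 : 1 ≤ T := le_min (one_le u) (one_le v)
  have hT0 : 0 < T := lt_of_lt_of_le one_pos hT1
  set t : ℝ := znorm (u - v) with htdef
  have ht1 : 1 ≤ t := one_le _
  have ht0 : 0 < t := lt_of_lt_of_le one_pos ht1
  set f : (Fin d → ℤ) → ℝ := fun m =>
    znorm (u - m) ^ (-a) * znorm m ^ (-(2+s)) * znorm (v - m) ^ (-a) with hfdef
  have hf0 : ∀ m, 0 ≤ f m := by
    intro m
    apply mul_nonneg (mul_nonneg _ _) _ <;> exact Real.rpow_nonneg (pos _).le _
  -- the generic "one distance is big" regions II/III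
  have hreg : ∀ (H : Finset (Fin d → ℤ)) (w c : Fin d → ℤ),
      (∀ m ∈ H, T/2 < znorm m) → (∀ m ∈ H, t/2 ≤ znorm (w - m)) →
      ∑ m ∈ H, znorm (w - m) ^ (-a) * (znorm m ^ (-(2+s)) * znorm (c - m) ^ (-a))
        ≤ (2:ℝ)^a * Ct * (2:ℝ)^s * t^(-a) * T^(-s) := by
    intro H w c hH1 hH2
    set T' : ℝ := max (T/2) 1 with hT'def
    have hT'1 : 1 ≤ T' := le_max_right _ _
    have hT'T : T/2 ≤ T' := le_max_left _ _
    have hterm : ∀ m ∈ H, znorm (w - m) ^ (-a) * (znorm m ^ (-(2+s)) * znorm (c - m) ^ (-a))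
        ≤ ((2:ℝ)^a * t^(-a)) * (znorm m ^ (-(2+s)) * znorm (c - m) ^ (-a)) := by
      intro m hm
      apply mul_le_mul_of_nonneg_right (half_collect ht0 (pos _) ha0.le (hH2 m hm))
      exact mul_nonneg (Real.rpow_nonneg (pos _).le _) (Real.rpow_nonneg (pos _).le _)
    calc ∑ m ∈ H, znorm (w - m) ^ (-a) * (znorm m ^ (-(2+s)) * znorm (c - m) ^ (-a))
        ≤ ∑ m ∈ H, ((2:ℝ)^a * t^(-a)) * (znorm m ^ (-(2+s)) * znorm (c - m) ^ (-a)) :=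
          Finset.sum_le_sum hterm
      _ = ((2:ℝ)^a * t^(-a)) * ∑ m ∈ H, znorm m ^ (-(2+s)) * znorm (c - m) ^ (-a) := by
          rw [Finset.mul_sum]
      _ ≤ ((2:ℝ)^a * t^(-a)) * (Ct * T' ^ ((d:ℝ) - (2+s) - a)) := by
          apply mul_le_mul_of_nonneg_left _ (by positivity)
          apply hCt H c T' hT'1
          intro m hm
          exact max_le (le_of_lt (hH1 m hm)) (one_le m)
      _ ≤ (2:ℝ)^a * Ct * (2:ℝ)^s * t^(-a) * T^(-s) := by
          have he : (d:ℝ) - (2+s) - a = -s := by rw [ha]; ring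
          rw [he]
          have h1 : T'^(-s) ≤ (T/2)^(-s) := rpow_neg_anti (by linarith) hT'T hs0.le
          have h2 : (T/2)^(-s) = (2:ℝ)^s * T^(-s) := by
            rw [Real.div_rpow hT0.le (by norm_num), Real.rpow_neg (by norm_num : (0:ℝ) ≤ 2),
              div_eq_mul_inv, inv_inv]
            ring
          rw [h2] at h1
          calc (2:ℝ)^a * t^(-a) * (Ct * T'^(-s))
              ≤ (2:ℝ)^a * t^(-a) * (Ct * ((2:ℝ)^s * T^(-s))) := by
                apply mul_le_mul_of_nonneg_left _ (by positivity)
                exact mul_le_mul_of_nonneg_left h1 hCt0.le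
            _ = (2:ℝ)^a * Ct * (2:ℝ)^s * t^(-a) * T^(-s) := by ring
  -- region split
  rw [← Finset.sum_filter_add_sum_filter_not F (fun m => znorm m ≤ T/2) f]
  set F1 := F.filter (fun m => znorm m ≤ T/2) with hF1
  set G := F.filter (fun m => ¬ znorm m ≤ T/2) with hGdef
  -- Region I
  have hI : ∑ m ∈ F1, f m ≤ (8:ℝ)^a * C6 * (t^(-a) * T^(-s)) := by
    have hterm : ∀ m ∈ F1, f m ≤ ((8:ℝ)^a * t^(-a) * T^(-a)) * znorm m ^ (-(2+s)) := by
      intro m hm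
      rw [hF1, Finset.mem_filter] at hm
      have hX : znorm m ≤ T/2 := hm.2
      have hPu : znorm u / 2 ≤ znorm (u - m) := by
        have h1 := znorm_le_add' u m
        have h2 : T ≤ znorm u := min_le_left _ _
        linarith
      have hPv : znorm v / 2 ≤ znorm (v - m) := by
        have h1 := znorm_le_add' v m
        have h2 : T ≤ znorm v := min_le_right _ _
        linarith
      have hprod : t/2 * T ≤ znorm u * znorm v := by
        have htuv : t ≤ znorm u + znorm v := sub_le u v
        rcases le_total (znorm u) (znorm v) with h | h
        · have hmin : T = znorm u := min_eq_left h
          have hv2 : t/2 ≤ znorm v := by linarith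
          calc t/2 * T = t/2 * znorm u := by rw [hmin]
            _ ≤ znorm v * znorm u := mul_le_mul_of_nonneg_right hv2 (pos u).le
            _ = znorm u * znorm v := by ring
        · have hmin : T = znorm v := min_eq_right h
          have hu2 : t/2 ≤ znorm u := by linarith
          calc t/2 * T = t/2 * znorm v := by rw [hmin]
            _ ≤ znorm u * znorm v := mul_le_mul_of_nonneg_right hu2 (pos v).le
      have h3 : znorm (u - m) ^ (-a) ≤ (znorm u / 2) ^ (-a) :=
        rpow_neg_anti (by have := pos u; linarith) hPu ha0.le
      have h4 : znorm (v - m) ^ (-a) ≤ (znorm v / 2) ^ (-a) :=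
        rpow_neg_anti (by have := pos v; linarith) hPv ha0.le
      have h5 : (znorm u / 2) ^ (-a) * (znorm v / 2) ^ (-a)
          = (znorm u * znorm v / 4) ^ (-a) := by
        rw [← Real.mul_rpow (by have := pos u; linarith) (by have := pos v; linarith)]
        congr 1
        ring
      have h6 : (znorm u * znorm v / 4) ^ (-a) ≤ (t * T / 8) ^ (-a) := by
        apply rpow_neg_anti (by positivity) _ ha0.le
        linarith
      have h7 : (t * T / 8) ^ (-a) = (8:ℝ)^a * t^(-a) * T^(-a) := by
        rw [show t * T / 8 = t * (T * (8:ℝ)⁻¹) by ring]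
        rw [Real.mul_rpow ht0.le (by positivity),
          Real.mul_rpow hT0.le (by norm_num)]
        rw [Real.inv_rpow (by norm_num : (0:ℝ) ≤ 8), Real.rpow_neg (by norm_num : (0:ℝ) ≤ 8),
          inv_inv]
        ring
      calc f m = znorm (u - m) ^ (-a) * znorm (v - m) ^ (-a) * znorm m ^ (-(2+s)) := by
            rw [hfdef]; ring
        _ ≤ (znorm u / 2) ^ (-a) * (znorm v / 2) ^ (-a) * znorm m ^ (-(2+s)) := by
            apply mul_le_mul_of_nonneg_right _ (Real.rpow_nonneg (pos _).le _)
            apply mul_le_mul h3 h4 (Real.rpow_nonneg (pos _).le _)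
            exact Real.rpow_nonneg (by have := pos u; positivity) _
        _ ≤ ((8:ℝ)^a * t^(-a) * T^(-a)) * znorm m ^ (-(2+s)) := by
            apply mul_le_mul_of_nonneg_right _ (Real.rpow_nonneg (pos _).le _)
            rw [h5, ← h7]
            exact h6
    calc ∑ m ∈ F1, f m
        ≤ ∑ m ∈ F1, ((8:ℝ)^a * t^(-a) * T^(-a)) * znorm m ^ (-(2+s)) :=
          Finset.sum_le_sum hterm
      _ = ((8:ℝ)^a * t^(-a) * T^(-a)) * ∑ m ∈ F1, znorm m ^ (-(2+s)) := by
          rw [Finset.mul_sum]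
      _ ≤ ((8:ℝ)^a * t^(-a) * T^(-a)) * (C6 * T ^ ((d:ℝ) - (2+s))) := by
          apply mul_le_mul_of_nonneg_left _ (by positivity)
          apply hC6 F1 T hT1
          intro m hm
          rw [hF1, Finset.mem_filter] at hm
          linarith [hm.2]
      _ = (8:ℝ)^a * C6 * (t^(-a) * (T^(-a) * T^((d:ℝ)-(2+s)))) := by ring
      _ = (8:ℝ)^a * C6 * (t^(-a) * T^(-s)) := by
          rw [← Real.rpow_add hT0]
          congr 2
          rw [ha]; ring
  -- Regions II and III
  have hG : ∑ m ∈ G, f m ≤ 2 * ((2:ℝ)^a * Ct * (2:ℝ)^s) * (t^(-a) * T^(-s)) := by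
    rw [← Finset.sum_filter_add_sum_filter_not G
      (fun m => znorm (v - m) ≤ znorm (u - m)) f]
    set G2 := G.filter (fun m => znorm (v - m) ≤ znorm (u - m)) with hG2
    set G3 := G.filter (fun m => ¬ znorm (v - m) ≤ znorm (u - m)) with hG3
    have hGT : ∀ m ∈ G, T/2 < znorm m := by
      intro m hm
      rw [hGdef, Finset.mem_filter] at hm
      push_neg at hm
      exact hm.2
    have hII : ∑ m ∈ G2, f m ≤ (2:ℝ)^a * Ct * (2:ℝ)^s * t^(-a) * T^(-s) := by
      have h8 : ∑ m ∈ G2, f m = ∑ m ∈ G2, znorm (u - m) ^ (-a) *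
          (znorm m ^ (-(2+s)) * znorm (v - m) ^ (-a)) := by
        apply Finset.sum_congr rfl
        intro m _
        rw [hfdef]; ring
      rw [h8]
      apply hreg G2 u v
      · intro m hm
        rw [hG2, Finset.mem_filter] at hm
        exact hGT m hm.1
      · intro m hm
        rw [hG2, Finset.mem_filter] at hm
        have htri : t ≤ znorm (u - m) + znorm (v - m) := by
          calc t ≤ znorm (u - m) + znorm (m - v) := tri u m v
            _ = znorm (u - m) + znorm (v - m) := by rw [sub_comm m v]
        linarith [hm.2]
    have hIII : ∑ m ∈ G3, f m ≤ (2:ℝ)^a * Ct * (2:ℝ)^s * t^(-a) * T^(-s) := by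
      have h8 : ∑ m ∈ G3, f m = ∑ m ∈ G3, znorm (v - m) ^ (-a) *
          (znorm m ^ (-(2+s)) * znorm (u - m) ^ (-a)) := by
        apply Finset.sum_congr rfl
        intro m _
        rw [hfdef]; ring
      rw [h8]
      apply hreg G3 v u
      · intro m hm
        rw [hG3, Finset.mem_filter] at hm
        exact hGT m hm.1
      · intro m hm
        rw [hG3, Finset.mem_filter] at hm
        have htri : t ≤ znorm (u - m) + znorm (v - m) := by
          calc t ≤ znorm (u - m) + znorm (m - v) := tri u m v
            _ = znorm (u - m) + znorm (v - m) := by rw [sub_comm m v]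
        have := hm.2
        push_neg at this
        linarith
    calc ∑ m ∈ G2, f m + ∑ m ∈ G3, f m
        ≤ (2:ℝ)^a * Ct * (2:ℝ)^s * t^(-a) * T^(-s)
          + (2:ℝ)^a * Ct * (2:ℝ)^s * t^(-a) * T^(-s) := add_le_add hII hIII
      _ = 2 * ((2:ℝ)^a * Ct * (2:ℝ)^s) * (t^(-a) * T^(-s)) := by ring
  calc ∑ m ∈ F1, f m + ∑ m ∈ G, f m
      ≤ (8:ℝ)^a * C6 * (t^(-a) * T^(-s))
        + 2 * ((2:ℝ)^a * Ct * (2:ℝ)^s) * (t^(-a) * T^(-s)) := add_le_add hI hG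
    _ = ((8:ℝ)^a * C6 + 2 * ((2:ℝ)^a * Ct * (2:ℝ)^s)) * t ^ (-a) * T ^ (-s) := by ring

/-- difference bound for ordered pair -/
lemma key1 {α₀ : ℝ} (hα0 : 0 < α₀) (hα1 : α₀ ≤ 1) {x y W : ℝ} (hx : 1 ≤ x) (hxy : x ≤ y)
    (hW : y - x ≤ W) : |x^(-α₀) - y^(-α₀)| ≤ x^(-α₀) * W / y := by
  have hx0 : (0:ℝ) < x := lt_of_lt_of_le one_pos hx
  have hy0 : (0:ℝ) < y := hx0.trans_le hxy
  have hnn : 0 ≤ x^(-α₀) - y^(-α₀) := by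
    have := rpow_neg_anti hx0 hxy hα0.le
    linarith
  rw [abs_of_nonneg hnn]
  have e : x^(-α₀) * (x/y)^(α₀) = y^(-α₀) := by
    rw [Real.div_rpow hx0.le hy0.le, Real.rpow_neg hx0.le, Real.rpow_neg hy0.le]
    field_simp
  have hq : x/y ≤ (x/y)^(α₀) := by
    have h1 : (x/y)^(1:ℝ) ≤ (x/y)^(α₀) :=
      Real.rpow_le_rpow_of_exponent_ge (by positivity) (by
        rw [div_le_one hy0]; exact hxy) hα1
    rwa [Real.rpow_one] at h1
  have hxpos : 0 ≤ x^(-α₀) := Real.rpow_nonneg hx0.le _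
  calc x^(-α₀) - y^(-α₀) = x^(-α₀) * (1 - (x/y)^(α₀)) := by
        rw [mul_sub, mul_one, e]
    _ ≤ x^(-α₀) * (1 - x/y) := by
        apply mul_le_mul_of_nonneg_left _ hxpos
        linarith
    _ = x^(-α₀) * ((y - x)/y) := by rw [sub_div' hy0.ne']; ring_nf
    _ ≤ x^(-α₀) * (W/y) := by
        apply mul_le_mul_of_nonneg_left _ hxpos
        exact div_le_div_of_nonneg_right hW (by positivity)
    _ = x^(-α₀) * W / y := by ring

/-- square of rpow collapse: (x^(-α₀))^2 = x^(-2α₀) -/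
lemma sq_rpow {x : ℝ} (hx : 0 < x) (α₀ : ℝ) : (x^(-α₀))^2 = x^(-(2*α₀)) := by
  rw [sq, ← Real.rpow_add hx]
  congr 1
  ring

lemma Dsq {α₀ s : ℝ} (hα0 : 0 < α₀) (hα1 : α₀ ≤ 1) (hs : s = 2*α₀) {x y W : ℝ}
    (hx : 1 ≤ x) (hy : 1 ≤ y) (hW : 1 ≤ W) (hxy : |x - y| ≤ W) :
    (x^(-α₀) - y^(-α₀))^2 ≤ (2:ℝ)^s * x^(-(2+s)) * W^(2+s) := by
  have hx0 : (0:ℝ) < x := lt_of_lt_of_le one_pos hx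
  have hy0 : (0:ℝ) < y := lt_of_lt_of_le one_pos hy
  have hW0 : (0:ℝ) < W := lt_of_lt_of_le one_pos hW
  have hs0 : 0 < s := by rw [hs]; linarith
  have h2s : (1:ℝ) ≤ (2:ℝ)^s := by
    have := Real.rpow_le_rpow_of_exponent_le one_le_two (le_of_lt hs0)
    rw [Real.rpow_zero] at this
    exact this
  have hW2 : W^(2:ℝ) ≤ W^(2+s) :=
    Real.rpow_le_rpow_of_exponent_le hW (by linarith)
  rcases le_total x y with hxy' | hxy'
  · -- x ≤ y : min is x
    have h1 : |x^(-α₀) - y^(-α₀)| ≤ x^(-α₀) * W / y := key1 hα0 hα1 hx hxy'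
      (by rw [abs_sub_comm] at hxy; rw [abs_of_nonneg (by linarith)] at hxy; linarith)
    have h2 : x^(-α₀) * W / y ≤ x^(-α₀) * W / x := by
      apply div_le_div_of_nonneg_left _ hx0 hxy'
      positivity
    have h3 : (x^(-α₀) - y^(-α₀))^2 ≤ (x^(-α₀) * W / x)^2 := by
      rw [← sq_abs]
      apply pow_le_pow_left₀ (abs_nonneg _) (h1.trans h2)
    refine h3.trans ?_
    have e1 : (x^(-α₀) * W / x)^2 = x^(-(2*α₀)) * W^(2:ℝ) * (x^(-(1:ℝ)))^2 := by
      rw [div_eq_mul_inv, mul_pow, mul_pow, sq_rpow hx0]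
      rw [← Real.rpow_neg_one x, ← Real.rpow_natCast W 2]
      norm_num
    rw [e1, sq_rpow hx0 1]
    have e2 : x^(-(2*α₀)) * W^(2:ℝ) * x^(-(2*1:ℝ)) = x^(-(2+s)) * W^(2:ℝ) := by
      rw [show x^(-(2*α₀)) * W^(2:ℝ) * x^(-(2*1:ℝ))
          = (x^(-(2*α₀)) * x^(-(2*1:ℝ))) * W^(2:ℝ) by ring,
        ← Real.rpow_add hx0]
      congr 2
      rw [hs]; ring
    rw [e2]
    calc x^(-(2+s)) * W^(2:ℝ) ≤ x^(-(2+s)) * W^(2+s) :=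
          mul_le_mul_of_nonneg_left hW2 (Real.rpow_nonneg hx0.le _)
      _ ≤ (2:ℝ)^s * x^(-(2+s)) * W^(2+s) := by
          have : (0:ℝ) ≤ x^(-(2+s)) * W^(2+s) := by positivity
          nlinarith
  · -- y ≤ x
    have h1 : |y^(-α₀) - x^(-α₀)| ≤ y^(-α₀) * W / x := key1 hα0 hα1 hy hxy'
      (by rw [abs_of_nonneg (by linarith)] at hxy; linarith)
    have h3 : (x^(-α₀) - y^(-α₀))^2 ≤ (y^(-α₀) * W / x)^2 := by
      rw [show (x^(-α₀) - y^(-α₀))^2 = (y^(-α₀) - x^(-α₀))^2 by ring, ← sq_abs]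
      apply pow_le_pow_left₀ (abs_nonneg _) h1
    refine h3.trans ?_
    have e1 : (y^(-α₀) * W / x)^2 = y^(-(2*α₀)) * W^(2:ℝ) * x^(-(2:ℝ)) := by
      rw [div_eq_mul_inv, mul_pow, mul_pow, sq_rpow hy0]
      rw [← Real.rpow_neg_one x, ← Real.rpow_natCast W 2, sq_rpow hx0 1]
      norm_num
    rw [e1]
    -- y^{-2α₀} = y^{-s} ≤ 2^s W^s x^{-s}
    have hxle : x ≤ 2*W*y := by
      have h4 : x - y ≤ W := by
        rw [abs_of_nonneg (by linarith)] at hxy; linarith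
      nlinarith
    have h5 : y^(-s) ≤ (2:ℝ)^s * W^s * x^(-s) := by
      have h6 : x/(2*W) ≤ y := by
        rw [div_le_iff₀ (by positivity)]
        nlinarith
      have h7 : y^(-s) ≤ (x/(2*W))^(-s) :=
        rpow_neg_anti (by positivity) h6 hs0.le
      have h8 : (x/(2*W))^(-s) = (2:ℝ)^s * W^s * x^(-s) := by
        rw [Real.div_rpow hx0.le (by positivity), Real.rpow_neg (by positivity : (0:ℝ) ≤ 2*W),
          div_eq_mul_inv, inv_inv, Real.mul_rpow (by norm_num : (0:ℝ) ≤ 2) hW0.le]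
        ring
      rw [← h8]; exact h7
    have e3 : y^(-(2*α₀)) = y^(-s) := by rw [hs]
    rw [e3]
    calc y^(-s) * W^(2:ℝ) * x^(-(2:ℝ))
        ≤ ((2:ℝ)^s * W^s * x^(-s)) * W^(2:ℝ) * x^(-(2:ℝ)) := by
          apply mul_le_mul_of_nonneg_right _ (Real.rpow_nonneg hx0.le _)
          apply mul_le_mul_of_nonneg_right h5 (Real.rpow_nonneg hW0.le _)
      _ = (2:ℝ)^s * (W^s * W^(2:ℝ)) * (x^(-s) * x^(-(2:ℝ))) := by ring
      _ = (2:ℝ)^s * W^(2+s) * x^(-(2+s)) := by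
          rw [← Real.rpow_add hW0, ← Real.rpow_add hx0]
          congr 2 <;> ring
      _ = (2:ℝ)^s * x^(-(2+s)) * W^(2+s) := by ring

end ZN

theorem stmt18 (d : ℕ) (hd : 5 ≤ d) (α : ℝ) (hα1 : 1 / 4 < α) (hα2 : α ≤ 1 / 3)
    (CM Cd : ℝ) :
    ∃ C : ℝ, 0 < C ∧
      ∀ (κ : ℝ), 0 ≤ κ →
      ∀ (M G₀ : (Fin d → ℤ) → (Fin d → ℤ) → ℝ),
        (∀ n₁ n₂ : Fin d → ℤ, |M n₁ n₂| ≤ CM / znorm (n₁ - n₂) ^ (3 * ((d : ℝ) - 2))) →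
        (∀ n n' : Fin d → ℤ, |G₀ n n'| ≤ Cd / znorm (n - n') ^ ((d : ℝ) - 2)) →
        ∀ n n' : Fin d → ℤ,
          (Summable fun q : (Fin d → ℤ) × (Fin d → ℤ) =>
            |G₀ n q.1 * (((κ * znorm q.1 ^ (-α)) ^ 2 - (κ * znorm q.2 ^ (-α)) ^ 2) ^ 2 *
              M q.1 q.2) * G₀ q.2 n'|) ∧
          |∑' q : (Fin d → ℤ) × (Fin d → ℤ),
              G₀ n q.1 * (((κ * znorm q.1 ^ (-α)) ^ 2 - (κ * znorm q.2 ^ (-α)) ^ 2) ^ 2 *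
                M q.1 q.2) * G₀ q.2 n'|
            ≤ C * κ ^ 4 /
              (znorm (n - n') ^ ((d : ℝ) - 2) * (min (znorm n) (znorm n')) ^ (4 * α)) := by
  classical
  have hdr : (5:ℝ) ≤ (d:ℝ) := by exact_mod_cast hd
  set s : ℝ := 4*α with hsdef
  set a : ℝ := (d:ℝ) - 2 with ha
  set b : ℝ := 3*a - (2+s) with hb
  have hs1 : 1 < s := by rw [hsdef]; linarith
  have hs43 : s ≤ 4/3 := by rw [hsdef]; linarith
  have ha3 : 3 ≤ a := by rw [ha]; linarith
  obtain ⟨K1, hK10, hK1⟩ := ZN.conv2 (d := d) b a a (by linarith) (by rw [hb]; linarith)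
    le_rfl (by rw [hb, ha]; linarith)
  obtain ⟨K2, hK20, hK2⟩ := ZN.outer (d := d) hd s (by linarith) (by linarith)
  refine ⟨(|CM|+1) * (|Cd|+1)^2 * (2:ℝ)^s * K1 * K2, by positivity, ?_⟩
  intro κ hκ M G₀ hM hG n n'
  set T : ℝ := min (znorm n) (znorm n') with hT
  have hT0 : (0:ℝ) < T := lt_min (ZN.pos n) (ZN.pos n')
  set t : ℝ := znorm (n - n') with ht
  have ht0 : (0:ℝ) < t := ZN.pos _
  set D : ℝ := κ^4 * ((|CM|+1) * (|Cd|+1)^2 * (2:ℝ)^s) with hD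
  have hD0 : 0 ≤ D := by positivity
  -- the comparison function
  set h : (Fin d → ℤ) → (Fin d → ℤ) → ℝ := fun n1 n2 =>
    znorm (n - n1) ^ (-a) * znorm n1 ^ (-(2+s)) *
      (znorm (n1 - n2) ^ (-b) * znorm (n' - n2) ^ (-a)) with hh
  have hh0 : ∀ n1 n2, 0 ≤ h n1 n2 := by
    intro n1 n2
    apply mul_nonneg (mul_nonneg _ _) (mul_nonneg _ _) <;>
      exact Real.rpow_nonneg (ZN.pos _).le _
  -- pointwise comparison
  have hpoint : ∀ n1 n2 : Fin d → ℤ,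
      |G₀ n n1 * (((κ * znorm n1 ^ (-α)) ^ 2 - (κ * znorm n2 ^ (-α)) ^ 2) ^ 2 *
        M n1 n2) * G₀ n2 n'| ≤ D * h n1 n2 := by
    intro n1 n2
    set x := znorm n1 with hx
    set y := znorm n2 with hy
    set W := znorm (n1 - n2) with hW
    set A := znorm (n - n1) with hA
    set B := znorm (n2 - n') with hB
    have hGa : |G₀ n n1| ≤ (|Cd|+1) * A^(-a) := by
      have h1 := hG n n1
      have h2 : Cd / A^a ≤ (|Cd|+1) * A^(-a) := by
        rw [div_eq_mul_inv, ← Real.rpow_neg (ZN.pos _).le]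
        apply mul_le_mul_of_nonneg_right _ (Real.rpow_nonneg (ZN.pos _).le _)
        calc Cd ≤ |Cd| := le_abs_self Cd
          _ ≤ |Cd|+1 := by linarith
      exact h1.trans h2
    have hGb : |G₀ n2 n'| ≤ (|Cd|+1) * B^(-a) := by
      have h1 := hG n2 n'
      have h2 : Cd / B^a ≤ (|Cd|+1) * B^(-a) := by
        rw [div_eq_mul_inv, ← Real.rpow_neg (ZN.pos _).le]
        apply mul_le_mul_of_nonneg_right _ (Real.rpow_nonneg (ZN.pos _).le _)
        calc Cd ≤ |Cd| := le_abs_self Cd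
          _ ≤ |Cd|+1 := by linarith
      exact h1.trans h2
    have hMb : |M n1 n2| ≤ (|CM|+1) * W^(-(3*a)) := by
      have h1 := hM n1 n2
      have h2 : CM / W^(3*a) ≤ (|CM|+1) * W^(-(3*a)) := by
        rw [div_eq_mul_inv, ← Real.rpow_neg (ZN.pos _).le]
        apply mul_le_mul_of_nonneg_right _ (Real.rpow_nonneg (ZN.pos _).le _)
        calc CM ≤ |CM| := le_abs_self CM
          _ ≤ |CM|+1 := by linarith
      exact h1.trans h2
    -- Δ² bound
    have hΔ : ((κ * x ^ (-α)) ^ 2 - (κ * y ^ (-α)) ^ 2) ^ 2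
        = κ^4 * (x^(-(2*α)) - y^(-(2*α)))^2 := by
      have e1 : (κ * x ^ (-α))^2 = κ^2 * x^(-(2*α)) := by
        rw [mul_pow, ZN.sq_rpow (ZN.pos n1) α]
      have e2 : (κ * y ^ (-α))^2 = κ^2 * y^(-(2*α)) := by
        rw [mul_pow, ZN.sq_rpow (ZN.pos n2) α]
      rw [e1, e2]
      ring
    have hDsq : (x^(-(2*α)) - y^(-(2*α)))^2 ≤ (2:ℝ)^s * x^(-(2+s)) * W^(2+s) := by
      apply ZN.Dsq (by linarith : (0:ℝ) < 2*α) (by linarith : 2*α ≤ 1)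
        (by rw [hsdef]; ring) (ZN.one_le n1) (ZN.one_le n2) (ZN.one_le _)
      exact ZN.abs_sub n1 n2
    have hWcomb : W^(2+s) * W^(-(3*a)) = W^(-b) := by
      rw [← Real.rpow_add (ZN.pos _)]
      congr 1
      rw [hb]; ring
    -- assemble
    rw [abs_mul, abs_mul, abs_mul]
    rw [abs_of_nonneg (sq_nonneg ((κ * x ^ (-α)) ^ 2 - (κ * y ^ (-α)) ^ 2))]
    have hxnn : (0:ℝ) ≤ x^(-(2+s)) := Real.rpow_nonneg (ZN.pos n1).le _
    have hWnn : (0:ℝ) ≤ W^(-b) := Real.rpow_nonneg (ZN.pos _).le _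
    have hWnn2 : (0:ℝ) ≤ W^(2+s) := Real.rpow_nonneg (ZN.pos _).le _
    have hAnn : (0:ℝ) ≤ A^(-a) := Real.rpow_nonneg (ZN.pos _).le _
    have hBnn : (0:ℝ) ≤ B^(-a) := Real.rpow_nonneg (ZN.pos _).le _
    have h2snn : (0:ℝ) ≤ (2:ℝ)^s := Real.rpow_nonneg (by norm_num) _
    have step1 : ((κ * x ^ (-α)) ^ 2 - (κ * y ^ (-α)) ^ 2) ^ 2 * |M n1 n2|
        ≤ κ^4 * (2:ℝ)^s * (|CM|+1) * (x^(-(2+s)) * W^(-b)) := by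
      rw [hΔ]
      have h1 : κ^4 * (x^(-(2*α)) - y^(-(2*α)))^2 ≤ κ^4 * ((2:ℝ)^s * x^(-(2+s)) * W^(2+s)) :=
        mul_le_mul_of_nonneg_left hDsq (by positivity)
      calc κ^4 * (x^(-(2*α)) - y^(-(2*α)))^2 * |M n1 n2|
          ≤ (κ^4 * ((2:ℝ)^s * x^(-(2+s)) * W^(2+s))) * ((|CM|+1) * W^(-(3*a))) := by
            apply mul_le_mul h1 hMb (abs_nonneg _)
            apply mul_nonneg (by positivity)
            exact mul_nonneg (mul_nonneg h2snn hxnn) hWnn2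
        _ = κ^4 * (2:ℝ)^s * (|CM|+1) * (x^(-(2+s)) * (W^(2+s) * W^(-(3*a)))) := by ring
        _ = κ^4 * (2:ℝ)^s * (|CM|+1) * (x^(-(2+s)) * W^(-b)) := by rw [hWcomb]
    calc |G₀ n n1| * (((κ * x ^ (-α)) ^ 2 - (κ * y ^ (-α)) ^ 2) ^ 2 * |M n1 n2|) * |G₀ n2 n'|
        ≤ ((|Cd|+1) * A^(-a)) * (κ^4 * (2:ℝ)^s * (|CM|+1) * (x^(-(2+s)) * W^(-b)))
          * ((|Cd|+1) * B^(-a)) := by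
          apply mul_le_mul _ hGb (abs_nonneg _) _
          · apply mul_le_mul hGa step1 _ (mul_nonneg (by positivity) hAnn)
            apply mul_nonneg (sq_nonneg _) (abs_nonneg _)
          · apply mul_nonneg (mul_nonneg (by positivity) hAnn)
            apply mul_nonneg (by positivity)
            exact mul_nonneg hxnn hWnn
      _ = D * (A ^ (-a) * x ^ (-(2+s)) * (W ^ (-b) * B^(-a))) := by
          rw [hD]; ring
      _ = D * h n1 n2 := by
          rw [hh, hB, ZN.sub_comm n2 n']
  -- finset sum bound
  have hkey : ∀ F : Finset ((Fin d → ℤ) × (Fin d → ℤ)),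
      (∑ q ∈ F, |G₀ n q.1 * (((κ * znorm q.1 ^ (-α)) ^ 2 - (κ * znorm q.2 ^ (-α)) ^ 2) ^ 2 *
        M q.1 q.2) * G₀ q.2 n'|)
      ≤ (|CM|+1) * (|Cd|+1)^2 * (2:ℝ)^s * K1 * K2 * κ ^ 4 /
        (t ^ a * T ^ (4 * α)) := by
    intro F
    set S1 := F.image Prod.fst with hS1
    set S2 := F.image Prod.snd with hS2
    have hsub : F ⊆ S1 ×ˢ S2 := by
      intro q hq
      rw [Finset.mem_product]
      exact ⟨Finset.mem_image_of_mem _ hq, Finset.mem_image_of_mem _ hq⟩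
    have step2 : (∑ q ∈ F, |G₀ n q.1 * (((κ * znorm q.1 ^ (-α)) ^ 2
        - (κ * znorm q.2 ^ (-α)) ^ 2) ^ 2 * M q.1 q.2) * G₀ q.2 n'|)
        ≤ ∑ q ∈ F, D * h q.1 q.2 :=
      Finset.sum_le_sum (fun q _ => hpoint q.1 q.2)
    have step3 : (∑ q ∈ F, D * h q.1 q.2) ≤ ∑ q ∈ S1 ×ˢ S2, D * h q.1 q.2 :=
      Finset.sum_le_sum_of_subset_of_nonneg hsub
        (fun q _ _ => mul_nonneg hD0 (hh0 q.1 q.2))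
    have step4 : (∑ q ∈ S1 ×ˢ S2, D * h q.1 q.2)
        ≤ D * K1 * (K2 * t ^ (-a) * T ^ (-s)) := by
      rw [Finset.sum_product' S1 S2 (fun n1 n2 => D * h n1 n2)]
      have inner : ∀ n1 ∈ S1, (∑ n2 ∈ S2, D * h n1 n2)
          ≤ D * K1 * (znorm (n - n1) ^ (-a) * znorm n1 ^ (-(2+s)) *
            znorm (n' - n1) ^ (-a)) := by
        intro n1 _
        have e4 : (∑ n2 ∈ S2, D * h n1 n2) = D * (znorm (n - n1) ^ (-a) *
            znorm n1 ^ (-(2+s))) * ∑ n2 ∈ S2, znorm (n1 - n2) ^ (-b) *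
            znorm (n' - n2) ^ (-a) := by
          rw [Finset.mul_sum]
          apply Finset.sum_congr rfl
          intro n2 _
          rw [hh]; ring
        rw [e4]
        have h5 := hK1 S2 n1 n'
        calc D * (znorm (n - n1) ^ (-a) * znorm n1 ^ (-(2+s))) *
            (∑ n2 ∈ S2, znorm (n1 - n2) ^ (-b) * znorm (n' - n2) ^ (-a))
            ≤ D * (znorm (n - n1) ^ (-a) * znorm n1 ^ (-(2+s))) *
              (K1 * znorm (n1 - n') ^ (-a)) := by
              apply mul_le_mul_of_nonneg_left h5
              apply mul_nonneg hD0
              exact mul_nonneg (Real.rpow_nonneg (ZN.pos _).le _) (Real.rpow_nonneg (ZN.pos _).le _)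
          _ = D * K1 * (znorm (n - n1) ^ (-a) * znorm n1 ^ (-(2+s)) *
              znorm (n' - n1) ^ (-a)) := by
              rw [ZN.sub_comm n1 n']; ring
      calc (∑ n1 ∈ S1, ∑ n2 ∈ S2, D * h n1 n2)
          ≤ ∑ n1 ∈ S1, D * K1 * (znorm (n - n1) ^ (-a) * znorm n1 ^ (-(2+s)) *
            znorm (n' - n1) ^ (-a)) := Finset.sum_le_sum inner
        _ = D * K1 * ∑ n1 ∈ S1, znorm (n - n1) ^ (-a) * znorm n1 ^ (-(2+s)) *
            znorm (n' - n1) ^ (-a) := by rw [Finset.mul_sum]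
        _ ≤ D * K1 * (K2 * t ^ (-a) * T ^ (-s)) := by
            have h6 := hK2 S1 n n'
            exact mul_le_mul_of_nonneg_left h6 (by positivity)
    have final : D * K1 * (K2 * t ^ (-a) * T ^ (-s))
        = (|CM|+1) * (|Cd|+1)^2 * (2:ℝ)^s * K1 * K2 * κ ^ 4 / (t ^ a * T ^ (4 * α)) := by
      rw [hD, Real.rpow_neg ht0.le, Real.rpow_neg hT0.le, hsdef]
      field_simp
    calc (∑ q ∈ F, |G₀ n q.1 * (((κ * znorm q.1 ^ (-α)) ^ 2
        - (κ * znorm q.2 ^ (-α)) ^ 2) ^ 2 * M q.1 q.2) * G₀ q.2 n'|)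
        ≤ ∑ q ∈ F, D * h q.1 q.2 := step2
      _ ≤ ∑ q ∈ S1 ×ˢ S2, D * h q.1 q.2 := step3
      _ ≤ D * K1 * (K2 * t ^ (-a) * T ^ (-s)) := step4
      _ = _ := final
  have habs : Summable fun q : (Fin d → ℤ) × (Fin d → ℤ) =>
      |G₀ n q.1 * (((κ * znorm q.1 ^ (-α)) ^ 2 - (κ * znorm q.2 ^ (-α)) ^ 2) ^ 2 *
        M q.1 q.2) * G₀ q.2 n'| := by
    apply summable_of_sum_le _ hkey
    intro q
    exact abs_nonneg _
  refine ⟨habs, ?_⟩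
  have hsummable : Summable fun q : (Fin d → ℤ) × (Fin d → ℤ) =>
      G₀ n q.1 * (((κ * znorm q.1 ^ (-α)) ^ 2 - (κ * znorm q.2 ^ (-α)) ^ 2) ^ 2 *
        M q.1 q.2) * G₀ q.2 n' := habs.of_abs
  calc |∑' q : (Fin d → ℤ) × (Fin d → ℤ),
      G₀ n q.1 * (((κ * znorm q.1 ^ (-α)) ^ 2 - (κ * znorm q.2 ^ (-α)) ^ 2) ^ 2 *
        M q.1 q.2) * G₀ q.2 n'|
      ≤ ∑' q : (Fin d → ℤ) × (Fin d → ℤ),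
        |G₀ n q.1 * (((κ * znorm q.1 ^ (-α)) ^ 2 - (κ * znorm q.2 ^ (-α)) ^ 2) ^ 2 *
          M q.1 q.2) * G₀ q.2 n'| := by
        have h9 : Summable fun q : (Fin d → ℤ) × (Fin d → ℤ) =>
            ‖G₀ n q.1 * (((κ * znorm q.1 ^ (-α)) ^ 2 - (κ * znorm q.2 ^ (-α)) ^ 2) ^ 2 *
              M q.1 q.2) * G₀ q.2 n'‖ := by
          simp only [Real.norm_eq_abs]
          exact habs
        have h10 := norm_tsum_le_tsum_norm (f := fun q : (Fin d → ℤ) × (Fin d → ℤ) =>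
          G₀ n q.1 * (((κ * znorm q.1 ^ (-α)) ^ 2 - (κ * znorm q.2 ^ (-α)) ^ 2) ^ 2 *
            M q.1 q.2) * G₀ q.2 n') h9
        simp only [Real.norm_eq_abs] at h10
        exact h10
    _ ≤ (|CM|+1) * (|Cd|+1)^2 * (2:ℝ)^s * K1 * K2 * κ ^ 4 / (t ^ a * T ^ (4 * α)) :=
        Summable.tsum_le_of_sum_le habs hkey
    _ = (|CM|+1) * (|Cd|+1)^2 * (2:ℝ)^s * K1 * K2 * κ ^ 4 /
        (znorm (n - n') ^ ((d:ℝ) - 2) * (min (znorm n) (znorm n')) ^ (4 * α)) := by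
        rw [← ha, ← ht, ← hT]
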